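/- Let (V_n)_{n≥3} be a sequence of real numbers with V_3 = 1 satisfying Zograf's recursion V_n = (1/2)·∑_{i=1}^{n-3} [i(n-i-2)/(n-1)]·C(n-4, i-1)·C(n, i+1)·V_{i+2}·V_{n-i} for all n ≥ 4. Then the formal power series h(x) = ∑_{n≥3} V_n/((n-1)!(n-3)!) · x^{n-1} satisfies the formal differential equation x·h'' − h' = h''·(x·h' − h). -/

import Mathlib

open PowerSeries

set_option maxHeartbeats 1000000 in
lemma key2 (k m : ℕ) (A B : ℝ) :
    A / (((k+2).factorial : ℝ) * (k.factorial : ℝ)) * ((k:ℝ)+2) * ((k:ℝ)+1) *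
        ((((m:ℝ)+2) - 1) * (B / (((m+2).factorial : ℝ) * (m.factorial : ℝ))))
      + B / (((m+2).factorial : ℝ) * (m.factorial : ℝ)) * ((m:ℝ)+2) * ((m:ℝ)+1) *
        ((((k:ℝ)+2) - 1) * (A / (((k+2).factorial : ℝ) * (k.factorial : ℝ))))
    = (((k:ℝ)+(m:ℝ)+1) * (((k:ℝ)+(m:ℝ))+3) / (((k+m+3).factorial : ℝ) * ((k+m+1).factorial : ℝ)))
      * ((((1+k)*(m+1) : ℕ) : ℝ) / (((k:ℝ)+(m:ℝ)+4) - 1) * (((k+m).choose k : ℕ) : ℝ) *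
          (((k+m+4).choose (k+2) : ℕ) : ℝ) * A * B) := by
  have h1 : ((k+m).choose k) * k.factorial * m.factorial = (k+m).factorial := by
    have := Nat.choose_mul_factorial_mul_factorial (Nat.le_add_right k m)
    simpa using this
  have h2 : ((k+m+4).choose (k+2)) * (k+2).factorial * (m+2).factorial = (k+m+4).factorial := by
    have hle : k+2 ≤ k+m+4 := by omega
    have e : k+m+4-(k+2) = m+2 := by omega
    have := Nat.choose_mul_factorial_mul_factorial hle
    rw [e] at this; exact this
  have c1 : (((k+m).choose k : ℕ) : ℝ) = ((k+m).factorial : ℝ) / ((k.factorial : ℝ) * (m.factorial : ℝ)) := by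
    rw [eq_div_iff (by positivity)]
    push_cast [← h1]; ring
  have c2 : (((k+m+4).choose (k+2) : ℕ) : ℝ)
      = ((k+m+4).factorial : ℝ) / (((k+2).factorial : ℝ) * ((m+2).factorial : ℝ)) := by
    rw [eq_div_iff (by positivity)]
    push_cast [← h2]; ring
  have e1 : ((k+2).factorial : ℝ) = ((k:ℝ)+2)*((k:ℝ)+1)*(k.factorial : ℝ) := by
    rw [show k+2 = (k+1)+1 from rfl, Nat.factorial_succ, Nat.factorial_succ]; push_cast; ring
  have e2 : ((m+2).factorial : ℝ) = ((m:ℝ)+2)*((m:ℝ)+1)*(m.factorial : ℝ) := by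
    rw [show m+2 = (m+1)+1 from rfl, Nat.factorial_succ, Nat.factorial_succ]; push_cast; ring
  have e3 : ((k+m+1).factorial : ℝ) = ((k:ℝ)+(m:ℝ)+1)*((k+m).factorial : ℝ) := by
    rw [Nat.factorial_succ]; push_cast; ring
  have e4 : ((k+m+3).factorial : ℝ)
      = ((k:ℝ)+(m:ℝ)+3)*((k:ℝ)+(m:ℝ)+2)*((k:ℝ)+(m:ℝ)+1)*((k+m).factorial : ℝ) := by
    rw [show k+m+3 = ((k+m+1)+1)+1 from rfl, Nat.factorial_succ, Nat.factorial_succ,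
      Nat.factorial_succ]; push_cast; ring
  have e5 : ((k+m+4).factorial : ℝ) = ((k:ℝ)+(m:ℝ)+4)*((k+m+3).factorial : ℝ) := by
    rw [show k+m+4 = (k+m+3)+1 from rfl, Nat.factorial_succ]; push_cast; ring
  rw [show ((k:ℝ)+(m:ℝ)+4)-1 = ((k:ℝ)+(m:ℝ))+3 from by ring]
  rw [c1, c2, e5, e4, e3, e1, e2]
  have hk : (k.factorial : ℝ) ≠ 0 := by positivity
  have hm : (m.factorial : ℝ) ≠ 0 := by positivity
  have hkm : ((k+m).factorial : ℝ) ≠ 0 := by positivity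
  have h3 : ((k:ℝ)+(m:ℝ)+3) ≠ 0 := by positivity
  push_cast
  field_simp
  ring

lemma sum_pair (f t : ℕ → ℝ) (n : ℕ) (c : ℝ)
    (hpair : ∀ k ∈ Finset.range (n+1), f k + f (n - k) = c * t k) :
    ∑ k ∈ Finset.range (n+1), f k = c/2 * ∑ k ∈ Finset.range (n+1), t k := by
  have hr : ∑ k ∈ Finset.range (n+1), f (n - k) = ∑ k ∈ Finset.range (n+1), f k := by
    have := Finset.sum_range_reflect f (n+1)
    simpa using this
  have h2 : ∑ k ∈ Finset.range (n+1), (f k + f (n-k)) = ∑ k ∈ Finset.range (n+1), c * t k :=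
    Finset.sum_congr rfl hpair
  rw [Finset.sum_add_distrib, hr, ← Finset.mul_sum] at h2
  linarith

theorem zograf_generating_function_ODE (V : ℕ → ℝ) (hV3 : V 3 = 1)
    (hrec : ∀ n : ℕ, 4 ≤ n →
      V n = (1 / 2) * ∑ i ∈ Finset.Icc 1 (n - 3),
        ((i * (n - i - 2) : ℕ) : ℝ) / ((n : ℝ) - 1) *
          ((n - 4).choose (i - 1)) * (n.choose (i + 1)) * V (i + 2) * V (n - i))
    (h : ℝ⟦X⟧)
    (hh : h = PowerSeries.mk fun m =>
      if 2 ≤ m then V (m + 1) / ((m.factorial : ℝ) * ((m - 2).factorial : ℝ)) else 0) :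
    X * d⁄dX ℝ (d⁄dX ℝ h) - d⁄dX ℝ h
      = d⁄dX ℝ (d⁄dX ℝ h) * (X * d⁄dX ℝ h - h) := by
  set a : ℕ → ℝ := fun m =>
      if 2 ≤ m then V (m + 1) / ((m.factorial : ℝ) * ((m - 2).factorial : ℝ)) else 0 with ha
  subst hh
  have ha0 : a 0 = 0 := by simp [ha]
  have ha1 : a 1 = 0 := by simp [ha]
  have haval : ∀ j : ℕ, a (j+2) = V (j+3) / (((j+2).factorial : ℝ) * ((j.factorial : ℝ))) := by
    intro j
    simp only [ha]
    rw [if_pos (by omega : 2 ≤ j + 2)]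
    congr 2
  ext n
  have hd1 : ∀ q : ℕ, coeff q (d⁄dX ℝ (mk a)) = a (q+1) * ((q:ℝ)+1) := by
    intro q; rw [coeff_derivative, coeff_mk]
  have hd2 : ∀ p : ℕ, coeff p (d⁄dX ℝ (d⁄dX ℝ (mk a))) = a (p+2) * ((p:ℝ)+2) * ((p:ℝ)+1) := by
    intro p; rw [coeff_derivative, hd1]; push_cast; ring
  have hq : ∀ q : ℕ, coeff q (X * d⁄dX ℝ (mk a) - mk a) = ((q:ℝ) - 1) * a q := by
    intro q
    rw [map_sub, coeff_mk]
    cases q with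
    | zero => rw [coeff_zero_X_mul]; push_cast; ring
    | succ q => rw [coeff_succ_X_mul, hd1]; push_cast; ring
  rw [map_sub]
  rcases n with _ | _ | N
  · rw [coeff_zero_X_mul, coeff_mul, hd1]
    simp [hq, hd2, ha0, ha1]
  · rw [coeff_succ_X_mul, coeff_mul, hd2, hd1]
    rw [Finset.Nat.sum_antidiagonal_eq_sum_range_succ
      (fun p q => coeff p (d⁄dX ℝ (d⁄dX ℝ (mk a))) * coeff q (X * d⁄dX ℝ (mk a) - mk a))]
    simp [hq, hd2, ha0, ha1, Finset.sum_range_succ]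
    ring
  · rw [coeff_succ_X_mul, coeff_mul, hd2, hd1]
    rw [Finset.Nat.sum_antidiagonal_eq_sum_range_succ
      (fun p q => coeff p (d⁄dX ℝ (d⁄dX ℝ (mk a))) * coeff q (X * d⁄dX ℝ (mk a) - mk a))]
    simp only [hq, hd2]
    rw [Finset.sum_range_succ, Finset.sum_range_succ]
    rw [show N+1+1-(N+2) = 0 from by omega, show N+1+1-(N+1) = 1 from by omega, ha0, ha1]
    simp only [mul_zero, add_zero]
    -- abbreviations for the two sums
    set t : ℕ → ℝ := fun k =>
      (((1+k) * (N+4-(1+k)-2) : ℕ) : ℝ) / ((N+4 : ℕ) - 1 : ℝ) *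
        (((N+4-4).choose (1+k-1) : ℕ) : ℝ) * (((N+4).choose (1+k+1) : ℕ) : ℝ) *
        V (1+k+2) * V (N+4-(1+k)) with ht
    have hV : V (N+4) = 1/2 * ∑ k ∈ Finset.range (N+1), t k := by
      rw [hrec (N+4) (by omega)]
      congr 1
      rw [show N+4-3 = N+1 from by omega, ← Finset.Ico_add_one_right_eq_Icc,
        Finset.sum_Ico_eq_sum_range]
      rw [show N+1+1-1 = N+1 from by omega]
    set c : ℝ := ((N:ℝ)+1)*((N:ℝ)+3)/(((N+3).factorial : ℝ)*((N+1).factorial : ℝ)) with hc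
    have hpair : ∀ k ∈ Finset.range (N+1),
        (fun x => a (x + 2) * ((x:ℝ) + 2) * ((x:ℝ) + 1) *
          ((((N + 1 + 1 - x : ℕ) : ℝ) - 1) * a (N + 1 + 1 - x))) k
        + (fun x => a (x + 2) * ((x:ℝ) + 2) * ((x:ℝ) + 1) *
          ((((N + 1 + 1 - x : ℕ) : ℝ) - 1) * a (N + 1 + 1 - x))) (N - k) = c * t k := by
      intro k hk
      have hkN : k ≤ N := by
        have := Finset.mem_range.mp hk; omega
      obtain ⟨m, rfl⟩ := Nat.exists_eq_add_of_le hkN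
      simp only [ht, hc]
      simp only [show k+m+4-(1+k)-2 = m+1 from by omega, show k+m+4-4 = k+m from by omega,
        show 1+k-1 = k from by omega, show 1+k+1 = k+2 from by omega,
        show 1+k+2 = k+3 from by omega, show k+m+4-(1+k) = m+3 from by omega,
        show k+m+1+1-k = m+2 from by omega, show k+m-k = m from by omega,
        show k+m+1+1-m = k+2 from by omega]
      rw [haval k, haval m]
      have K := key2 k m (V (k+3)) (V (m+3))
      push_cast at K ⊢
      linear_combination K
    rw [sum_pair (fun x => a (x + 2) * ((x:ℝ) + 2) * ((x:ℝ) + 1) *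
          ((((N + 1 + 1 - x : ℕ) : ℝ) - 1) * a (N + 1 + 1 - x))) t N c hpair]
    have hA : a (N+3) = V (N+4) / (((N+3).factorial : ℝ) * ((N+1).factorial : ℝ)) := by
      have h := haval (N+1)
      rw [show N+1+2 = N+3 from by omega, show N+1+3 = N+4 from by omega] at h
      exact h
    rw [show N+1+2 = N+3 from by omega, show N+1+1+1 = N+3 from by omega,
      show N+1+1 = N+2 from by omega]
    rw [hA, hV, hc]
    push_cast
    ring
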